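/- Let D be the digraph of a complete bipartite graph between an uncountable set X and a countably infinite set B_0, with all edges directed from X towards B_0. Then a subset I of X is linkable to B_0 if and only if I is countable; hence M_L(D, B_0) does not satisfy the maximality axiom (IM) and is not a matroid. -/

import Mathlib

open Set

universe u

variable {V : Type*}

/-- A directed path in the digraph `D`: a nonempty duplicate-free list of vertices
with an edge between consecutive vertices. -/
structure DiPath {V : Type*} (D : V → V → Prop) where
  verts : List V
  ne : verts ≠ []
  nodup : verts.Nodup
  chain : verts.Chain' D

namespace DiPath

variable {D : V → V → Prop}

/-- The initial vertex of a directed path. -/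
def first (p : DiPath D) : V := p.verts.head p.ne

/-- The terminal vertex of a directed path. -/
def last (p : DiPath D) : V := p.verts.getLast p.ne

/-- The set of vertices of a directed path. -/
def vertSet (p : DiPath D) : Set V := {v | v ∈ p.verts}

/-- The set of (directed) edges of a directed path. -/
def edgeSet (p : DiPath D) : Set (V × V) := {e | e ∈ p.verts.zip p.verts.tail}

end DiPath

/-- The set of initial vertices of a collection of paths. -/
def Ini {D : V → V → Prop} (P : Set (DiPath D)) : Set V := {v | ∃ p ∈ P, p.first = v}

/-- The set of terminal vertices of a collection of paths. -/
def Ter {D : V → V → Prop} (P : Set (DiPath D)) : Set V := {v | ∃ p ∈ P, p.last = v}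

/-- All vertices used by a collection of paths. -/
def LinkVerts {D : V → V → Prop} (P : Set (DiPath D)) : Set V := ⋃ p ∈ P, p.vertSet

/-- All edges used by a collection of paths. -/
def LinkEdges {D : V → V → Prop} (P : Set (DiPath D)) : Set (V × V) := ⋃ p ∈ P, p.edgeSet

/-- A linkage in the dimaze `(D, B0)`: a set of pairwise vertex-disjoint directed
paths, each ending in `B0`. -/
def IsLinkage (D : V → V → Prop) (B0 : Set V) (P : Set (DiPath D)) : Prop :=
  (∀ p ∈ P, p.last ∈ B0) ∧
  (∀ p ∈ P, ∀ q ∈ P, p ≠ q → Disjoint p.vertSet q.vertSet)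

/-- `(D, B0)` is a dimaze: every vertex of `B0` has out-degree `0`. -/
def IsDimaze (D : V → V → Prop) (B0 : Set V) : Prop := ∀ b ∈ B0, ∀ v, ¬ D b v

/-- A set of vertices is linkable if it is the set of initial vertices of a linkage. -/
def Linkable (D : V → V → Prop) (B0 : Set V) (I : Set V) : Prop :=
  ∃ P, IsLinkage D B0 P ∧ Ini P = I

/-- A set of vertices is linkable onto `B0` if it is the set of initial vertices of
a linkage whose terminal vertices are all of `B0`. -/
def LinkableOnto (D : V → V → Prop) (B0 : Set V) (I : Set V) : Prop :=
  ∃ P, IsLinkage D B0 P ∧ Ini P = I ∧ Ter P = B0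

/-- `I` is a maximal element (w.r.t. inclusion) of the set system `Ind`. -/
def MaximalIn {α : Type*} (Ind : Set α → Prop) (I : Set α) : Prop :=
  Ind I ∧ ∀ J, Ind J → I ⊆ J → J = I

/-- The maximality axiom (IM). -/
def SatisfiesIM {α : Type*} (Ind : Set α → Prop) : Prop :=
  ∀ I X : Set α, Ind I → I ⊆ X →
    ∃ J, Ind J ∧ I ⊆ J ∧ J ⊆ X ∧ ∀ K, Ind K → K ⊆ X → J ⊆ K → K = J

/-- `Ind` is the collection of independent sets of a matroid:
axioms (I1), (I2), (I3) and (IM). -/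
def IsMatroidIndep {α : Type*} (Ind : Set α → Prop) : Prop :=
  Ind ∅ ∧
  (∀ I J : Set α, I ⊆ J → Ind J → Ind I) ∧
  (∀ I B : Set α, Ind I → ¬ MaximalIn Ind I → MaximalIn Ind B →
    ∃ x ∈ B \ I, Ind (insert x I)) ∧
  SatisfiesIM Ind

/-- The dimaze `(D, B0)` contains an alternating comb: there is an alternating ray
(given by the injective vertex sequence `f` and edge orientations `o`, with
infinitely many vertices of in-degree 2) together with a linkage of all its
in-degree-2 vertices and its first vertex onto a set of exits contained in `B0`,
by disjoint paths meeting the ray exactly at their initial vertices. -/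
def ContainsAltComb (D : V → V → Prop) (B0 : Set V) : Prop :=
  ∃ (f : ℕ → V) (o : ℕ → Bool) (P : Set (DiPath D)),
    Function.Injective f ∧
    (∀ n, if o n then D (f n) (f (n+1)) else D (f (n+1)) (f n)) ∧
    (∀ N, ∃ k ≥ N, o k = true ∧ o (k+1) = false) ∧
    IsLinkage D B0 P ∧
    Ini P = insert (f 0) {v | ∃ k, o k = true ∧ o (k+1) = false ∧ v = f (k+1)} ∧
    (∀ p ∈ P, ∀ v ∈ p.vertSet, v ∈ Set.range f → v = p.first)
/-- The complete bipartite digraph from `X` to `B`, all edges directed towards `B`. -/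
def completeBipAdj (X B : Type*) : X ⊕ B → X ⊕ B → Prop :=
  fun a b => ∃ x y, a = Sum.inl x ∧ b = Sum.inr y

section Aux

variable {X B : Type*}

/-- The length-two path `inl x ⟶ inr b`. -/
def bipPath (x : X) (b : B) : DiPath (completeBipAdj X B) where
  verts := [Sum.inl x, Sum.inr b]
  ne := by simp
  nodup := by simp
  chain := by
    refine List.isChain_cons_cons.mpr ⟨⟨x, b, rfl, rfl⟩, ?_⟩
    simp [List.isChain_singleton]

lemma bipPath_first (x : X) (b : B) : (bipPath x b).first = Sum.inl x := rfl

lemma bipPath_last (x : X) (b : B) : (bipPath x b).last = Sum.inr b := rfl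

lemma bipPath_vertSet (x : X) (b : B) :
    (bipPath x b).vertSet = {Sum.inl x, Sum.inr b} := by
  ext v; simp [bipPath, DiPath.vertSet]

lemma linkable_empty (D : V → V → Prop) (B0 : Set V) : Linkable D B0 ∅ := by
  refine ⟨∅, ⟨by simp, by simp⟩, ?_⟩
  ext v; simp [Ini]

lemma linkable_of_countable {I : Set X} (hB2 : Infinite B) (hI : I.Countable) :
    Linkable (completeBipAdj X B) (Set.range Sum.inr) (Sum.inl '' I) := by
  have : Countable ↥I := hI.to_subtype
  obtain ⟨g, hg⟩ := Set.countable_iff_exists_injective.mp hI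
  set e : ↥I → B := fun x => Infinite.natEmbedding B (g x) with he
  have heinj : Function.Injective e :=
    (Infinite.natEmbedding B).injective.comp hg
  refine ⟨Set.range (fun x : ↥I => bipPath (x : X) (e x)), ⟨?_, ?_⟩, ?_⟩
  · rintro p ⟨x, rfl⟩
    exact ⟨e x, rfl⟩
  · rintro p ⟨x, rfl⟩ q ⟨y, rfl⟩ hpq
    have hxy : x ≠ y := by rintro rfl; exact hpq rfl
    rw [bipPath_vertSet, bipPath_vertSet, Set.disjoint_iff]
    rintro v ⟨hv1, hv2⟩
    simp only [Set.mem_insert_iff, Set.mem_singleton_iff] at hv1 hv2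
    rcases hv1 with rfl | rfl <;> rcases hv2 with h | h
    · exact hxy (Subtype.ext (Sum.inl_injective h))
    · exact (Sum.inl_ne_inr h).elim
    · exact (Sum.inr_ne_inl h).elim
    · exact hxy (heinj (Sum.inr_injective h))
  · ext v
    constructor
    · rintro ⟨p, ⟨x, rfl⟩, rfl⟩
      exact ⟨x, x.2, rfl⟩
    · rintro ⟨x, hx, rfl⟩
      exact ⟨bipPath x (e ⟨x, hx⟩), ⟨⟨x, hx⟩, rfl⟩, rfl⟩

lemma countable_of_linkable {I : Set X} (hB1 : Countable B)
    (h : Linkable (completeBipAdj X B) (Set.range Sum.inr) (Sum.inl '' I)) :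
    I.Countable := by
  obtain ⟨P, ⟨hlast, hdisj⟩, hIni⟩ := h
  have hmem : ∀ x : ↥I, ∃ p ∈ P, p.first = Sum.inl (x : X) := by
    intro x
    have : Sum.inl (x : X) ∈ Ini P := hIni ▸ ⟨x, x.2, rfl⟩
    exact this
  choose p hpP hpfirst using hmem
  have hlastmem : ∀ x : ↥I, ∃ b : B, (p x).last = Sum.inr b := fun x =>
    (hlast _ (hpP x)).imp fun b hb => hb.symm
  choose f hf using hlastmem
  have hfirst_mem : ∀ q : DiPath (completeBipAdj X B), q.first ∈ q.vertSet :=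
    fun q => List.head_mem q.ne
  have hlast_mem : ∀ q : DiPath (completeBipAdj X B), q.last ∈ q.vertSet :=
    fun q => List.getLast_mem q.ne
  have hfinj : Function.Injective f := by
    intro x y hxy
    have hpeq : p x = p y := by
      by_contra hne
      have := hdisj _ (hpP x) _ (hpP y) hne
      exact this.ne_of_mem (hlast_mem (p x)) (hlast_mem (p y))
        (by rw [hf x, hf y, hxy])
    have : (Sum.inl (x : X) : X ⊕ B) = Sum.inl (y : X) := by
      rw [← hpfirst x, ← hpfirst y, hpeq]
    exact Subtype.ext (Sum.inl.injEq _ _ ▸ this)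
  obtain ⟨gB, hgB⟩ := Countable.exists_injective_nat B
  exact Set.countable_iff_exists_injective.mpr ⟨gB ∘ f, hgB.comp hfinj⟩

end Aux

/-- For the complete bipartite digraph from an uncountable set `X` to a countably
infinite set `B0` (all edges towards `B0`), a subset of `X` is linkable iff it is
countable; hence the linkability system fails (IM) and is not a matroid. -/
theorem completeBipartite_not_matroid (X B : Type*) (hX : ¬ Countable X)
    (hB1 : Countable B) (hB2 : Infinite B) :
    (∀ I : Set X,
      Linkable (completeBipAdj X B) (Set.range Sum.inr) (Sum.inl '' I) ↔ I.Countable) ∧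
    ¬ SatisfiesIM (Linkable (completeBipAdj X B) (Set.range Sum.inr)) ∧
    ¬ IsMatroidIndep (Linkable (completeBipAdj X B) (Set.range Sum.inr)) := by
  have hiff : ∀ I : Set X,
      Linkable (completeBipAdj X B) (Set.range Sum.inr) (Sum.inl '' I) ↔ I.Countable :=
    fun I => ⟨countable_of_linkable hB1, linkable_of_countable hB2⟩
  have hIM : ¬ SatisfiesIM (Linkable (completeBipAdj X B) (Set.range Sum.inr)) := by
    intro h
    obtain ⟨J, hJind, -, hJX, hmax⟩ :=
      h ∅ (Sum.inl '' Set.univ) (linkable_empty _ _) (Set.empty_subset _)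
    have hJr : J ⊆ Set.range Sum.inl := by
      intro v hv; rcases hJX hv with ⟨x, -, rfl⟩; exact ⟨x, rfl⟩
    have hJeq : Sum.inl '' (Sum.inl ⁻¹' J) = J :=
      Set.image_preimage_eq_of_subset (by simpa using hJr)
    set I : Set X := Sum.inl ⁻¹' J with hI
    have hIc : I.Countable := (hiff I).mp (hJeq ▸ hJind)
    have huniv : ¬ (Set.univ : Set X).Countable := fun hc =>
      hX ((Equiv.Set.univ X).countable_iff.mp hc.to_subtype)
    obtain ⟨x, hxI⟩ : ∃ x, x ∉ I := by
      by_contra hcon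
      push_neg at hcon
      exact huniv (hIc.mono fun y _ => hcon y)
    have hKind : Linkable (completeBipAdj X B) (Set.range Sum.inr)
        (Sum.inl '' insert x I) := (hiff _).mpr (hIc.insert x)
    have hKeq := hmax _ hKind (by intro v hv; rcases hv with ⟨y, -, rfl⟩; exact ⟨y, trivial, rfl⟩)
      (by rw [← hJeq]; exact Set.image_mono (Set.subset_insert x I))
    have himg : (Sum.inl '' insert x I : Set (X ⊕ B)) = Sum.inl '' I := by rw [hKeq, ← hJeq]
    have : insert x I = I := Set.image_injective.mpr Sum.inl_injective himg
    exact hxI (this ▸ Set.mem_insert x I)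
  exact ⟨hiff, hIM, fun h => hIM h.2.2.2⟩
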